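/- Let N be a positive natural number and V = Fin N → ℝ with weighted inner product ⟨f,g⟩ = w·Σ_i f i·g i (w > 0) and pointwise product *. Let Δh : V →ₗ[ℝ] V be symmetric and G = Δh∘Δh + 2a·Δh + α·id for reals a, α. Let Δt ∈ ℝ, M̄, q̄, φⁿ, φⁿ⁺¹, qⁿ, qⁿ⁺¹ ∈ V satisfy: μ = G((φⁿ+φⁿ⁺¹)/2) + (1/2)·((qⁿ+qⁿ⁺¹)/2)*q̄, φⁿ⁺¹ - φⁿ = -Δt·(M̄*μ), and qⁿ⁺¹ - qⁿ = q̄*(φⁿ⁺¹ - φⁿ). Then the discrete energy Fᵏ = (1/2)⟨φᵏ,Gφᵏ⟩ + (1/4)⟨qᵏ,qᵏ⟩ satisfies Fⁿ⁺¹ - Fⁿ = -Δt·⟨μ, M̄*μ⟩; in particular Fⁿ⁺¹ ≤ Fⁿ when Δt ≥ 0 and M̄ is pointwise nonnegative (energy dissipation law of the fully discrete EQ scheme for the Allen–Cahn model, Scheme 4.1). -/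
import Mathlib


/-- Energy dissipation law of the fully discrete EQ scheme for the
Allen–Cahn model (Scheme 4.1). -/
theorem discrete_energy_dissipation_AC_EQ
    (N : ℕ) (hN : 0 < N) (w : ℝ) (hw : 0 < w)
    (ip : (Fin N → ℝ) → (Fin N → ℝ) → ℝ)
    (hip : ∀ f g, ip f g = w * ∑ i, f i * g i)
    (Δh : (Fin N → ℝ) →ₗ[ℝ] (Fin N → ℝ))
    (hsym : ∀ f g, ip (Δh f) g = ip f (Δh g))
    (a α : ℝ) (G : (Fin N → ℝ) → (Fin N → ℝ))
    (hG : ∀ f, G f = Δh (Δh f) + (2 * a) • Δh f + α • f)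
    (Δt : ℝ) (Mbar qbar phin phin1 qn qn1 mu : Fin N → ℝ)
    (hmu : mu = G ((1 / 2 : ℝ) • (phin + phin1)) +
      (1 / 2 : ℝ) • (((1 / 2 : ℝ) • (qn + qn1)) * qbar))
    (hphi : phin1 - phin = (-Δt) • (Mbar * mu))
    (hq : qn1 - qn = qbar * (phin1 - phin))
    (Fn Fn1 : ℝ)
    (hFn : Fn = (1 / 2) * ip phin (G phin) + (1 / 4) * ip qn qn)
    (hFn1 : Fn1 = (1 / 2) * ip phin1 (G phin1) + (1 / 4) * ip qn1 qn1) :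
    Fn1 - Fn = -Δt * ip mu (Mbar * mu) ∧
    (0 ≤ Δt → (∀ i, 0 ≤ Mbar i) → Fn1 ≤ Fn) := by
  -- bilinearity lemmas for ip
  have ip_comm : ∀ f g, ip f g = ip g f := by
    intro f g; simp only [hip]; congr 1; apply Finset.sum_congr rfl; intros; ring
  have ip_add_right : ∀ f g h, ip f (g + h) = ip f g + ip f h := by
    intro f g h; simp only [hip, Pi.add_apply, mul_add, Finset.sum_add_distrib]
  have ip_sub_right : ∀ f g h, ip f (g - h) = ip f g - ip f h := by
    intro f g h; simp only [hip, Pi.sub_apply, mul_sub, Finset.sum_sub_distrib]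
  have ip_add_left : ∀ f g h, ip (f + g) h = ip f h + ip g h := by
    intro f g h; rw [ip_comm, ip_add_right, ip_comm h f, ip_comm h g]
  have ip_smul_right : ∀ (c : ℝ) f g, ip f (c • g) = c * ip f g := by
    intro c f g
    simp only [hip, Pi.smul_apply, smul_eq_mul]
    have : ∑ i, f i * (c * g i) = c * ∑ i, f i * g i := by
      rw [Finset.mul_sum]; apply Finset.sum_congr rfl; intros; ring
    rw [this]; ring
  have ip_smul_left : ∀ (c : ℝ) f g, ip (c • f) g = c * ip f g := by
    intro c f g; rw [ip_comm, ip_smul_right, ip_comm]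
  have ip_mul_assoc : ∀ f g h, ip f (g * h) = ip (f * g) h := by
    intro f g h; simp only [hip, Pi.mul_apply]; congr 1
    apply Finset.sum_congr rfl; intros; ring
  -- G is symmetric w.r.t. ip
  have hGsym : ∀ f g, ip f (G g) = ip g (G f) := by
    intro f g
    simp only [hG]
    rw [ip_add_right, ip_add_right, ip_add_right, ip_add_right,
        ip_smul_right, ip_smul_right, ip_smul_right, ip_smul_right]
    linear_combination (hsym g (Δh f)) - (hsym f (Δh g)) + ip_comm (Δh f) (Δh g) +
      2 * a * ((hsym g f) - ip_comm (Δh g) f) + α * ip_comm f g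
  -- G is linear
  have hGadd : ∀ f g, G (f + g) = G f + G g := by
    intro f g; simp only [hG, map_add, smul_add]; abel
  have hGsub : ∀ f g, G (f - g) = G f - G g := by
    intro f g; simp only [hG, map_sub, smul_sub]; abel
  have hGsmul : ∀ (c : ℝ) f, G (c • f) = c • G f := by
    intro c f; simp only [hG, map_smul, smul_add, smul_comm c]
  set d := phin1 - phin with hd
  -- main identity
  have step2 : ip phin1 (G phin1) - ip phin (G phin) = ip (phin + phin1) (G d) := by
    rw [hd, hGsub, ip_add_left, ip_sub_right, ip_sub_right]
    have := hGsym phin phin1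
    linarith
  have step3 : ip qn1 qn1 - ip qn qn = ip (qn + qn1) (qn1 - qn) := by
    rw [ip_add_left, ip_sub_right, ip_sub_right]
    have := ip_comm qn qn1
    linarith
  have step4 : ip (qn + qn1) (qn1 - qn) = ip ((qn + qn1) * qbar) d := by
    rw [hq, ip_mul_assoc, hd]
  have key : Fn1 - Fn = ip mu d := by
    rw [hFn, hFn1, hmu]
    rw [ip_add_left, hGsmul, ip_smul_left, smul_mul_assoc, ip_smul_left, ip_smul_left]
    have h5 : ip (G (phin + phin1)) d = ip (phin + phin1) (G d) := by
      rw [ip_comm, hGsym]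
    linarith [step2, step3, step4, h5]
  have keyval : Fn1 - Fn = -Δt * ip mu (Mbar * mu) := by
    rw [key, hphi, ip_smul_right]
  refine ⟨keyval, fun hΔt hM => ?_⟩
  have hnn : 0 ≤ ip mu (Mbar * mu) := by
    rw [hip]
    apply mul_nonneg hw.le
    apply Finset.sum_nonneg
    intro i _
    have := hM i
    have : mu i * (Mbar * mu) i = Mbar i * (mu i) ^ 2 := by
      simp [Pi.mul_apply]; ring
    rw [this]
    positivity
  nlinarith [keyval]
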